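/- Let Q ⊆ L be fields with L = Q[α] where α^n ∈ Q for some positive integer n, and let d = [L:Q]. Then there exists an n-th root of unity ε ∈ L such that ε·α^d ∈ Q. In particular, if Q contains all n-th roots of unity lying in L, then α^d ∈ Q. -/

import Mathlib

/-- If `L = Q[α]` with `α ^ n ∈ Q` for some `n > 0`, and `d = [L : Q]`, then there
is an `n`-th root of unity `ε ∈ L` with `ε * α ^ d ∈ Q`; in particular, if `Q`
contains all `n`-th roots of unity in `L`, then `α ^ d ∈ Q`. -/
theorem stmt2 (Q L : Type*) [Field Q] [Field L] [Algebra Q L]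
    [FiniteDimensional Q L]
    (α : L) (n : ℕ) (hn : 0 < n)
    (hpow : α ^ n ∈ (algebraMap Q L).range)
    (hgen : Algebra.adjoin Q {α} = ⊤)
    (d : ℕ) (hd : d = Module.finrank Q L) :
    (∃ ε : L, ε ^ n = 1 ∧ ε * α ^ d ∈ (algebraMap Q L).range) ∧
      ((∀ ζ : L, ζ ^ n = 1 → ζ ∈ (algebraMap Q L).range) →
        α ^ d ∈ (algebraMap Q L).range) := by
  have main : ∃ ε : L, ε ^ n = 1 ∧ ε * α ^ d ∈ (algebraMap Q L).range := by
    by_cases hα0 : α = 0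
    · refine ⟨1, one_pow n, ?_⟩
      rcases Nat.eq_zero_or_pos d with h | h
      · exact ⟨1, by simp [h]⟩
      · exact ⟨0, by simp [hα0, zero_pow h.ne']⟩
    obtain ⟨a, ha⟩ := hpow
    have hα : IsIntegral Q α := IsIntegral.of_finite Q α
    set p := minpoly Q α with hp
    -- degree
    have htop : IntermediateField.adjoin Q {α} = ⊤ := by
      apply IntermediateField.toSubalgebra_injective
      rw [IntermediateField.adjoin_simple_toSubalgebra_of_isAlgebraic hα.isAlgebraic, hgen]
      rfl
    have hdeg : d = p.natDegree := by
      rw [hd, ← IntermediateField.adjoin.finrank hα, htop,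
        IntermediateField.finrank_top']
    -- p divides X^n - C a
    have hdvd : p ∣ (Polynomial.X ^ n - Polynomial.C a) := by
      apply minpoly.dvd
      simp [ha]
    -- work in an algebraic closure
    set F := AlgebraicClosure L
    set f := algebraMap Q F with hf
    have hsp : (p.map f).Splits := IsAlgClosed.splits _
    set pm := p.map f with hpm
    have hmon : p.Monic := minpoly.monic hα
    have hcoeff : pm.coeff 0 = (-1) ^ pm.natDegree * pm.roots.prod :=
      hsp.coeff_zero_eq_prod_roots_of_monic (hmon.map f)
    have hcard : pm.roots.card = p.natDegree :=
      by rw [← hsp.natDegree_eq_card_roots, hpm, Polynomial.natDegree_map]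
    have hroot : ∀ β ∈ pm.roots, β ^ n = f a := by
      intro β hβ
      have h1 : pm.IsRoot β := Polynomial.isRoot_of_mem_roots hβ
      have h2 : ((Polynomial.X ^ n - Polynomial.C a).map f).IsRoot β := by
        obtain ⟨q, hq⟩ := hdvd
        rw [hq, Polynomial.map_mul]
        exact Polynomial.IsRoot.dvd h1 ⟨q.map f, rfl⟩
      have := h2
      simp only [Polynomial.IsRoot, Polynomial.eval_map, Polynomial.eval₂_sub,
        Polynomial.eval₂_pow, Polynomial.eval₂_X, Polynomial.eval₂_C, sub_eq_zero] at this
      exact this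
    have hprodn : pm.roots.prod ^ n = f a ^ p.natDegree := by
      have h1 : (pm.roots.map fun β => β ^ n).prod = pm.roots.prod ^ n := by
        simpa using Multiset.prod_map_pow (m := pm.roots) (f := id) (n := n)
      rw [← h1, Multiset.map_congr rfl hroot, Multiset.map_const', Multiset.prod_replicate, hcard]
    -- the key identity in Q
    have hkey : ((-1) ^ d * p.coeff 0) ^ n = a ^ d := by
      apply (algebraMap Q F).injective
      have hc0 : pm.coeff 0 = f (p.coeff 0) := Polynomial.coeff_map f 0
      have hnd : pm.natDegree = p.natDegree := Polynomial.natDegree_map f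
      rw [hdeg, map_pow, map_mul, map_pow, map_neg, map_one, ← hc0, hcoeff, hnd, map_pow,
        ← mul_assoc, ← pow_add, ← two_mul, pow_mul, neg_one_sq, one_pow, one_mul, hprodn]
    have ha0 : a ≠ 0 := by
      rintro rfl
      rw [map_zero] at ha
      exact hα0 ((pow_eq_zero_iff hn.ne').mp ha.symm)
    refine ⟨algebraMap Q L ((-1) ^ d * p.coeff 0) / α ^ d, ?_, ?_⟩
    · rw [div_pow, ← map_pow, hkey, ← pow_mul, mul_comm d n, pow_mul, ← ha, ← map_pow]
      exact div_self (map_ne_zero_iff _ (algebraMap Q L).injective |>.mpr (pow_ne_zero d ha0))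
    · rw [div_mul_cancel₀]
      · exact ⟨_, rfl⟩
      · exact pow_ne_zero d hα0
  refine ⟨main, fun h => ?_⟩
  obtain ⟨ε, hε1, hε2⟩ := main
  obtain ⟨q, hq⟩ := h ε hε1
  have hε0 : ε ≠ 0 := by
    rintro rfl
    rw [zero_pow hn.ne'] at hε1
    exact zero_ne_one hε1
  obtain ⟨c, hc⟩ := hε2
  refine ⟨q⁻¹ * c, ?_⟩
  rw [map_mul, map_inv₀, hq, hc, ← mul_assoc, inv_mul_cancel₀ hε0, one_mul]
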